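/- For every integer ℓ ≥ 1, every ℓ-tree G with n vertices, and every integer k with 1 ≤ k ≤ ℓ+1, the number of k-cliques in G equals C(ℓ, k-1) · (n - (ℓ+1)(k-1)/k), and the total number of cliques in G (including the empty clique) equals 2^ℓ · (n - ℓ + 1). -/

import Mathlib

/-- The number of `k`-cliques of `G`. -/
noncomputable def SimpleGraph.cliqueCount {V : Type*} (G : SimpleGraph V) (k : ℕ) : ℕ :=
  {s : Finset V | G.IsNClique k s}.ncard

/-- The total number of cliques of `G` (including the empty clique). -/
noncomputable def SimpleGraph.totalCliqueCount {V : Type*} (G : SimpleGraph V) : ℕ :=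
  {s : Finset V | G.IsClique (s : Set V)}.ncard

/-- An `ℓ`-tree: either a copy of the complete graph `K_ℓ`, or obtained from an `ℓ`-tree
by adding a new vertex adjacent exactly to the vertices of an `ℓ`-clique. -/
inductive SimpleGraph.IsLTree (ℓ : ℕ) : {V : Type} → SimpleGraph V → Prop
  | base {V : Type} (G : SimpleGraph V) :
      Nonempty (G ≃g (⊤ : SimpleGraph (Fin ℓ))) → SimpleGraph.IsLTree ℓ G
  | extend {V : Type} (G : SimpleGraph V) (v : V)
      (hclique : G.IsClique (G.neighborSet v)) (hcard : (G.neighborSet v).ncard = ℓ)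
      (h : SimpleGraph.IsLTree ℓ (G.induce {u | u ≠ v})) : SimpleGraph.IsLTree ℓ G

section Aux

open SimpleGraph Finset

lemma LTreeAux.split_count {V : Type} [Fintype V] (P : Finset V → Prop) (v : V) :
    {s : Finset V | P s}.ncard
      = {s : Finset V | P s ∧ v ∈ s}.ncard + {s : Finset V | P s ∧ v ∉ s}.ncard := by
  classical
  rw [← Set.ncard_union_eq]
  · congr 1; ext s; by_cases h : v ∈ s <;> simp [h]
  · rw [Set.disjoint_left]; rintro s ⟨-, h⟩ ⟨-, h'⟩; exact h' h

lemma LTreeAux.insert_injOn {V : Type} [DecidableEq V] (v : V) {A : Set (Finset V)}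
    (hA : ∀ t ∈ A, v ∉ t) : Set.InjOn (fun t => insert v t) A := by
  intro s hs t ht h
  have := congrArg (fun x => Finset.erase x v) h
  simpa [Finset.erase_insert (hA s hs), Finset.erase_insert (hA t ht)] using this

lemma LTreeAux.cliques_containing {V : Type} [DecidableEq V] (G : SimpleGraph V) (v : V)
    (hclique : G.IsClique (G.neighborSet v)) :
    {s : Finset V | G.IsClique ↑s ∧ v ∈ s}
      = (fun t => insert v t) '' {t : Finset V | ↑t ⊆ G.neighborSet v} := by
  ext s
  simp only [Set.mem_setOf_eq, Set.mem_image]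
  constructor
  · rintro ⟨hc, hv⟩
    refine ⟨s.erase v, ?_, Finset.insert_erase hv⟩
    intro u hu
    simp only [Finset.coe_erase, Set.mem_diff, Set.mem_singleton_iff, Finset.mem_coe] at hu
    exact (hc hu.1 hv hu.2).symm
  · rintro ⟨t, ht, rfl⟩
    have hvt : v ∉ t := fun h => G.irrefl (ht h)
    refine ⟨?_, Finset.mem_insert_self v t⟩
    intro a ha b hb hab
    simp only [Finset.coe_insert, Set.mem_insert_iff, Finset.mem_coe] at ha hb
    rcases ha with rfl | ha
    · rcases hb with rfl | hb
      · exact absurd rfl hab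
      · exact ht hb
    · rcases hb with rfl | hb
      · exact (ht ha).symm
      · exact hclique (ht ha) (ht hb) hab

lemma LTreeAux.ncliques_containing {V : Type} [DecidableEq V] (G : SimpleGraph V) (v : V)
    (hclique : G.IsClique (G.neighborSet v)) (k : ℕ) (hk : 1 ≤ k) :
    {s : Finset V | G.IsNClique k s ∧ v ∈ s}
      = (fun t => insert v t) ''
          {t : Finset V | ↑t ⊆ G.neighborSet v ∧ t.card = k - 1} := by
  ext s
  simp only [Set.mem_setOf_eq, Set.mem_image, SimpleGraph.isNClique_iff]
  constructor
  · rintro ⟨⟨hc, hcard⟩, hv⟩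
    refine ⟨s.erase v, ⟨?_, by rw [Finset.card_erase_of_mem hv, hcard]⟩,
      Finset.insert_erase hv⟩
    intro u hu
    simp only [Finset.coe_erase, Set.mem_diff, Set.mem_singleton_iff, Finset.mem_coe] at hu
    exact (hc hu.1 hv hu.2).symm
  · rintro ⟨t, ⟨ht, htc⟩, rfl⟩
    have hvt : v ∉ t := fun h => G.irrefl (ht h)
    refine ⟨⟨?_, by rw [Finset.card_insert_of_notMem hvt, htc, Nat.sub_add_cancel hk]⟩,
      Finset.mem_insert_self v t⟩
    intro a ha b hb hab
    simp only [Finset.coe_insert, Set.mem_insert_iff, Finset.mem_coe] at ha hb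
    rcases ha with rfl | ha
    · rcases hb with rfl | hb
      · exact absurd rfl hab
      · exact ht hb
    · rcases hb with rfl | hb
      · exact (ht ha).symm
      · exact hclique (ht ha) (ht hb) hab

lemma LTreeAux.cliques_avoiding {V : Type} (G : SimpleGraph V) (v : V) :
    {s : Finset V | G.IsClique ↑s ∧ v ∉ s}
      = (fun t : Finset {u : V | u ≠ v} =>
          t.map (Function.Embedding.subtype _)) ''
          {t | (G.induce {u : V | u ≠ v}).IsClique ↑t} := by
  classical
  ext s
  simp only [Set.mem_setOf_eq, Set.mem_image]
  constructor
  · rintro ⟨hc, hv⟩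
    refine ⟨s.subtype (fun u => u ≠ v), ?_, ?_⟩
    · intro a ha b hb hab
      simp only [Finset.mem_coe, Finset.mem_subtype] at ha hb
      exact hc ha hb (Subtype.coe_injective.ne hab)
    · refine (Finset.subtype_map (fun u => u ≠ v) (s := s)).trans ?_
      exact Finset.filter_true_of_mem fun u hu => fun h => hv (h ▸ hu)
  · rintro ⟨t, ht, rfl⟩
    constructor
    · intro a ha b hb hab
      rw [Finset.coe_map] at ha hb
      obtain ⟨a', ha', rfl⟩ := ha
      obtain ⟨b', hb', rfl⟩ := hb
      exact ht ha' hb' (fun h => hab (congrArg _ h))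
    · simp only [Finset.mem_map, Function.Embedding.coe_subtype]
      rintro ⟨a, -, ha⟩
      exact a.2 ha

lemma LTreeAux.ncliques_avoiding {V : Type} (G : SimpleGraph V) (v : V) (k : ℕ) :
    {s : Finset V | G.IsNClique k s ∧ v ∉ s}
      = (fun t : Finset {u : V | u ≠ v} =>
          t.map (Function.Embedding.subtype _)) ''
          {t | (G.induce {u : V | u ≠ v}).IsNClique k t} := by
  have h := LTreeAux.cliques_avoiding G v
  ext s
  simp only [Set.mem_setOf_eq, Set.mem_image, SimpleGraph.isNClique_iff] at *
  constructor
  · rintro ⟨⟨hc, hcard⟩, hv⟩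
    obtain ⟨t, ht, rfl⟩ := (Set.ext_iff.1 h s).1 ⟨hc, hv⟩
    exact ⟨t, ⟨ht, by simpa using hcard⟩, rfl⟩
  · rintro ⟨t, ⟨ht, hcard⟩, rfl⟩
    obtain ⟨h1, h2⟩ := (Set.ext_iff.1 h _).2 ⟨t, ht, rfl⟩
    exact ⟨⟨h1, by simpa using hcard⟩, h2⟩

lemma LTreeAux.count_subsets {V : Type} [Fintype V] [DecidableEq V] (A : Set V) :
    {t : Finset V | ↑t ⊆ A}.ncard = 2 ^ A.ncard := by
  classical
  have hfin := Set.toFinite A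
  have : {t : Finset V | ↑t ⊆ A} = ↑hfin.toFinset.powerset := by
    ext t
    rw [Finset.mem_coe, Finset.mem_powerset, Set.Finite.subset_toFinset, Set.mem_setOf_eq]
  rw [this, Set.ncard_coe_finset, Finset.card_powerset,
    Set.ncard_eq_toFinset_card _ hfin]

lemma LTreeAux.count_subsets_card {V : Type} [Fintype V] [DecidableEq V] (A : Set V) (j : ℕ) :
    {t : Finset V | ↑t ⊆ A ∧ t.card = j}.ncard = A.ncard.choose j := by
  classical
  have hfin := Set.toFinite A
  have : {t : Finset V | ↑t ⊆ A ∧ t.card = j} = ↑(hfin.toFinset.powersetCard j) := by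
    ext t
    rw [Set.mem_setOf_eq, Finset.mem_coe, Finset.mem_powersetCard, Set.Finite.subset_toFinset]
  rw [this, Set.ncard_coe_finset, Finset.card_powersetCard,
    Set.ncard_eq_toFinset_card _ hfin]

lemma LTreeAux.arith_base (ℓ j : ℕ) (hj : j ≤ ℓ) :
    (ℓ.choose (j + 1) : ℚ)
      = (ℓ.choose j : ℚ) * ((ℓ : ℚ) - ((ℓ : ℚ) + 1) * (j : ℚ) / ((j : ℚ) + 1)) := by
  have key : (ℓ.choose (j + 1) : ℚ) * ((j : ℚ) + 1)
      = (ℓ.choose j : ℚ) * ((ℓ : ℚ) - (j : ℚ)) := by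
    rw [← Nat.cast_sub hj]
    exact_mod_cast Nat.choose_succ_right_eq ℓ j
  have hj1 : ((j : ℚ) + 1) ≠ 0 := by positivity
  field_simp
  linear_combination key

theorem LTreeAux.main (ℓ : ℕ) {V : Type} (G : SimpleGraph V)
    (hG : SimpleGraph.IsLTree ℓ G) : ∀ [Fintype V],
    (∀ k : ℕ, 1 ≤ k → k ≤ ℓ + 1 →
      (G.cliqueCount k : ℚ) =
        (ℓ.choose (k - 1) : ℚ) *
          ((Fintype.card V : ℚ) - ((ℓ : ℚ) + 1) * ((k - 1 : ℕ) : ℚ) / (k : ℚ))) ∧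
    (G.totalCliqueCount : ℚ) = 2 ^ ℓ * ((Fintype.card V : ℚ) - ℓ + 1) := by
  induction hG with
  | @base V G e =>
    intro _
    classical
    obtain ⟨e⟩ := e
    have hadj : ∀ a b : V, G.Adj a b ↔ a ≠ b := fun a b => by
      rw [← e.map_adj_iff, SimpleGraph.top_adj, ne_eq, ne_eq,
        EmbeddingLike.apply_eq_iff_eq]
    have hcl : ∀ s : Finset V, G.IsClique ↑s := fun s a _ b _ hab => (hadj a b).2 hab
    have hcardV : Fintype.card V = ℓ := by
      rw [← Fintype.card_fin ℓ]; exact Fintype.card_congr e.toEquiv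
    constructor
    · intro k hk1 hk2
      obtain ⟨j, rfl⟩ : ∃ j, k = j + 1 := ⟨k - 1, (Nat.succ_pred_eq_of_pos hk1).symm⟩
      have hcc : G.cliqueCount (j + 1) = ℓ.choose (j + 1) := by
        show {s : Finset V | G.IsNClique (j + 1) s}.ncard = _
        have hset : {s : Finset V | G.IsNClique (j + 1) s}
            = ((Finset.univ.powersetCard (j + 1) : Finset (Finset V)) : Set (Finset V)) := by
          ext s
          simp only [Set.mem_setOf_eq, SimpleGraph.isNClique_iff, Finset.mem_coe,
            Finset.mem_powersetCard]
          exact ⟨fun ⟨_, h⟩ => ⟨Finset.subset_univ s, h⟩, fun ⟨_, h⟩ => ⟨hcl s, h⟩⟩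
        rw [hset, Set.ncard_coe_finset, Finset.card_powersetCard, Finset.card_univ, hcardV]
      rw [hcc, hcardV]
      have hj : j ≤ ℓ := by omega
      simpa using LTreeAux.arith_base ℓ j hj
    · have hset : {s : Finset V | G.IsClique ↑s} = Set.univ := by
        ext s; simp [hcl s]
      have htot : G.totalCliqueCount = 2 ^ ℓ := by
        show {s : Finset V | G.IsClique ↑s}.ncard = _
        rw [hset, Set.ncard_univ, Nat.card_eq_fintype_card, Fintype.card_finset, hcardV]
      rw [htot, hcardV]
      push_cast
      ring
  | @extend V G v hclique hcard h ih =>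
    intro _
    classical
    haveI : Fintype ↥{u : V | u ≠ v} := Set.Finite.fintype (Set.toFinite _)
    obtain ⟨ihk, ihtot⟩ := ih
    have hcS : Fintype.card ↥{u : V | u ≠ v} = Fintype.card V - 1 := by
      have h1 : Fintype.card ↥{u : V | u ≠ v} = Fintype.card {u : V // ¬(u = v)} :=
        Fintype.card_congr (Equiv.refl _)
      rw [h1, Fintype.card_subtype_compl, Fintype.card_subtype_eq]
    have hn1 : 1 ≤ Fintype.card V := @Fintype.card_pos V _ ⟨v⟩
    have hm : ((Fintype.card V - 1 : ℕ) : ℚ) = (Fintype.card V : ℚ) - 1 := by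
      rw [Nat.cast_sub hn1]; norm_num
    constructor
    · intro k hk1 hk2
      have h1 : {s : Finset V | G.IsNClique k s ∧ v ∈ s}.ncard = ℓ.choose (k - 1) := by
        rw [LTreeAux.ncliques_containing G v hclique k hk1,
          Set.ncard_image_of_injOn
            (LTreeAux.insert_injOn v (fun t ht hvt => G.irrefl (ht.1 hvt))),
          LTreeAux.count_subsets_card, hcard]
      have h2 : {s : Finset V | G.IsNClique k s ∧ v ∉ s}.ncard
          = (G.induce {u : V | u ≠ v}).cliqueCount k := by
        rw [LTreeAux.ncliques_avoiding G v k,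
          Set.ncard_image_of_injOn (Finset.map_injective _).injOn]
        rfl
      have hsplit : G.cliqueCount k
          = ℓ.choose (k - 1) + (G.induce {u : V | u ≠ v}).cliqueCount k := by
        show {s : Finset V | G.IsNClique k s}.ncard = _
        rw [LTreeAux.split_count (fun s => G.IsNClique k s) v, h1, h2]
      have hih := ihk k hk1 hk2
      rw [hcS, hm] at hih
      rw [hsplit]
      push_cast
      rw [hih]
      ring
    · have h1 : {s : Finset V | G.IsClique ↑s ∧ v ∈ s}.ncard = 2 ^ ℓ := by
        rw [LTreeAux.cliques_containing G v hclique,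
          Set.ncard_image_of_injOn
            (LTreeAux.insert_injOn v (by intro t ht hvt; exact G.irrefl (ht hvt))),
          LTreeAux.count_subsets, hcard]
      have h2 : {s : Finset V | G.IsClique ↑s ∧ v ∉ s}.ncard
          = (G.induce {u : V | u ≠ v}).totalCliqueCount := by
        rw [LTreeAux.cliques_avoiding G v,
          Set.ncard_image_of_injOn (Finset.map_injective _).injOn]
        rfl
      have hsplit : G.totalCliqueCount
          = 2 ^ ℓ + (G.induce {u : V | u ≠ v}).totalCliqueCount := by
        show {s : Finset V | G.IsClique ↑s}.ncard = _
        rw [LTreeAux.split_count (fun s => G.IsClique ↑s) v, h1, h2]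
      rw [hcS, hm] at ihtot
      rw [hsplit]
      push_cast
      rw [ihtot]
      ring

end Aux

/-- For `ℓ ≥ 1`, every `ℓ`-tree on `n` vertices has exactly
`C(ℓ, k-1) * (n - (ℓ+1)(k-1)/k)` cliques of size `k` for every `1 ≤ k ≤ ℓ + 1`, and
exactly `2^ℓ * (n - ℓ + 1)` cliques in total. -/
theorem cliqueCount_of_isLTree (ℓ : ℕ) (hℓ : 1 ≤ ℓ)
    (V : Type) [Fintype V] (G : SimpleGraph V) (hG : SimpleGraph.IsLTree ℓ G)
    (n : ℕ) (hn : Fintype.card V = n) :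
    (∀ k : ℕ, 1 ≤ k → k ≤ ℓ + 1 →
      (G.cliqueCount k : ℚ) =
        (ℓ.choose (k - 1) : ℚ) * ((n : ℚ) - ((ℓ : ℚ) + 1) * ((k - 1 : ℕ) : ℚ) / (k : ℚ))) ∧
    (G.totalCliqueCount : ℚ) = 2 ^ ℓ * ((n : ℚ) - ℓ + 1) := by
  subst hn
  exact LTreeAux.main ℓ G hG
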